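/- arXiv:2205.15275 — 2 statements merged into one kernel-verified Lean document; each statement's English description precedes it below -/
import Mathlib

section
/- Let b : int M → ℕ be a function with bounded above support such that for all u ∈ int M, the sum over v ∈ (↑u) ∩ int(↓T(u)) of b(v) is finite (i.e. b is an admissible Betti function). Then the direct sum ⊕_{v ∈ int M} B_v^{b(v)} : M^op → Vect_F is pointwise finite-dimensional, cohomological, sequentially continuous, and has bounded above support (i.e., lies in the category J). -/
open CategoryTheory CategoryTheory.Limits Opposite

noncomputable section

/-- The strip `M ⊂ ℝᵒᵖ × ℝ` between the two lines of slope `-1` given by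
`x + y = a` and `x + y = b`. -/
def Strip (a b : ℝ) : Type := {p : ℝ × ℝ // a ≤ p.1 + p.2 ∧ p.1 + p.2 ≤ b}

namespace Strip

variable {a b : ℝ}

/-- The partial order inherited from `ℝᵒᵖ × ℝ`. -/
instance : PartialOrder (Strip a b) where
  le p q := q.1.1 ≤ p.1.1 ∧ p.1.2 ≤ q.1.2
  le_refl p := ⟨le_rfl, le_rfl⟩
  le_trans p q r h h' := ⟨le_trans h'.1 h.1, le_trans h.2 h'.2⟩
  le_antisymm p q h h' :=
    Subtype.ext (Prod.ext (le_antisymm h'.1 h.1) (le_antisymm h.2 h'.2))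

lemma le_def {p q : Strip a b} : p ≤ q ↔ q.1.1 ≤ p.1.1 ∧ p.1.2 ≤ q.1.2 := Iff.rfl

/-- The glide reflection `T`. -/
def glide (p : Strip a b) : Strip a b :=
  ⟨(a - p.1.2, b - p.1.1), by
    obtain ⟨h1, h2⟩ := p.2; constructor <;> dsimp <;> linarith⟩

/-- The glide reflection `T` as an order isomorphism of `M`. -/
def glideEquiv : Strip a b ≃o Strip a b where
  toFun := glide
  invFun p := ⟨(b - p.1.2, a - p.1.1), by
    obtain ⟨h1, h2⟩ := p.2; constructor <;> dsimp <;> linarith⟩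
  left_inv p := Subtype.ext (by simp [glide])
  right_inv p := Subtype.ext (by simp [glide])
  map_rel_iff' {p q} := by
    show (glide p ≤ glide q) ↔ _
    simp only [le_def, glide]
    constructor <;> rintro ⟨h1, h2⟩ <;> exact ⟨by linarith, by linarith⟩

lemma glideEquiv_coords (p : Strip a b) :
    (glideEquiv p).1 = (a - p.1.2, b - p.1.1) := rfl

lemma glideEquiv_symm_coords (p : Strip a b) :
    (glideEquiv.symm p).1 = (b - p.1.2, a - p.1.1) := rfl

/-- The boundary `∂M = l₀ ∪ l₁`. -/
def OnBoundary (p : Strip a b) : Prop := p.1.1 + p.1.2 = a ∨ p.1.1 + p.1.2 = b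

/-- The interior `int M`. -/
def InInterior (p : Strip a b) : Prop := a < p.1.1 + p.1.2 ∧ p.1.1 + p.1.2 < b

/-- `u` belongs to `(↓v) ∩ int(↑ T⁻¹ v)`, the support of the contravariant block `B_v`;
equivalently, `v ∈ (↑u) ∩ int(↓ T u)`. -/
def BlockCond (v u : Strip a b) : Prop :=
  u ≤ v ∧ u.1.1 < b - v.1.2 ∧ a - v.1.1 < u.1.2

lemma blockCond_convex {v u u' u'' : Strip a b} (h1 : u ≤ u') (h2 : u' ≤ u'')
    (hu : BlockCond v u) (hu'' : BlockCond v u'') : BlockCond v u' :=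
  ⟨le_trans h2 hu''.1, lt_of_le_of_lt h1.1 hu.2.1, lt_of_lt_of_le hu.2.2 h1.2⟩

lemma simpleCond_convex {w u u' u'' : Strip a b} (h1 : u ≤ u') (h2 : u' ≤ u'')
    (hu : u = w) (hu'' : u'' = w) : u' = w :=
  le_antisymm (hu'' ▸ h2) (hu ▸ h1)

variable (a b) in
/-- An axis-aligned rectangle in `M` with corners `u ≤ v ≤ w` and remaining corner on `l₁`. -/
def IsCohomRect (u v w : Strip a b) : Prop :=
  u ≤ v ∧ v ≤ w ∧
    ((v.1.1 = u.1.1 ∧ v.1.2 = w.1.2 ∧ w.1.1 + u.1.2 = b) ∨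
     (v.1.1 = w.1.1 ∧ v.1.2 = u.1.2 ∧ u.1.1 + w.1.2 = b))

lemma IsCohomRect.w_le_glide {u v w : Strip a b} (h : IsCohomRect a b u v w) :
    w ≤ glideEquiv u := by
  obtain ⟨h1, h2, h3⟩ := h
  have hu := u.2; have hv := v.2; have hw := w.2
  obtain ⟨hle1, hle2⟩ := h1; obtain ⟨hle3, hle4⟩ := h2
  rw [le_def]
  rcases h3 with ⟨e1, e2, e3⟩ | ⟨e1, e2, e3⟩ <;>
    exact ⟨by rw [glideEquiv_coords]; dsimp; linarith,
           by rw [glideEquiv_coords]; dsimp; linarith⟩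

lemma IsCohomRect.glideInv_le {u v w : Strip a b} (h : IsCohomRect a b u v w) :
    glideEquiv.symm w ≤ u := by
  have := h.w_le_glide
  have h2 := glideEquiv.symm.monotone this
  simpa using h2

end Strip

section Functors

open Strip

variable (a b : ℝ) (K : Type) [Field K]

attribute [local instance] Classical.propDecidable

/-- auxiliary linear map used for the internal maps of `condFunctor`. -/
def condMap (P : Strip a b → Prop) (u u' : Strip a b) :
    ((PLift (P u') → K) →ₗ[K] (PLift (P u) → K)) where
  toFun f _ := if h' : P u' then f ⟨h'⟩ else 0
  map_add' f g := by funext h; by_cases h' : P u' <;> simp [h']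
  map_smul' c f := by funext h; by_cases h' : P u' <;> simp [h']

@[simp] lemma condMap_apply (P : Strip a b → Prop) (u u' : Strip a b)
    (f : PLift (P u') → K) (h : PLift (P u)) :
    condMap a b K P u u' f h = if h' : P u' then f ⟨h'⟩ else 0 := rfl

/-- A functor `Mᵒᵖ ⥤ Vect_K` supported on the set of points satisfying `P`,
with internal maps the identity wherever possible.  Both the contravariant blocks `B_v`
and the simple functors `S_w` arise this way. -/
def condFunctor (P : Strip a b → Prop)
    (hconv : ∀ ⦃u u' u'' : Strip a b⦄, u ≤ u' → u' ≤ u'' → P u → P u'' → P u') :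
    (Strip a b)ᵒᵖ ⥤ ModuleCat K where
  obj u := ModuleCat.of K (PLift (P u.unop) → K)
  map {x y} f := ModuleCat.ofHom (condMap a b K P y.unop x.unop)
  map_id x := by
    refine ModuleCat.hom_ext (LinearMap.ext fun f => ?_)
    funext h
    show (if h' : P x.unop then f ⟨h'⟩ else 0) = f h
    rw [dif_pos h.down]
  map_comp {x y z} f g := by
    refine ModuleCat.hom_ext (LinearMap.ext fun v => ?_)
    funext h
    show (if h' : P x.unop then v ⟨h'⟩ else 0)
        = condMap a b K P z.unop y.unop (condMap a b K P y.unop x.unop v) h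
    by_cases hx : P x.unop
    · have hy : P y.unop := hconv (leOfHom g.unop) (leOfHom f.unop) h.down hx
      simp [hx, hy]
    · by_cases hy : P y.unop <;> simp [hx, hy]

/-- The contravariant block `B_v`. -/
def Block (v : Strip a b) : (Strip a b)ᵒᵖ ⥤ ModuleCat K :=
  condFunctor a b K (BlockCond v) (fun _ _ _ h1 h2 hu hu'' => blockCond_convex h1 h2 hu hu'')

/-- The simple functor `S_w`. -/
def SimpleF (w : Strip a b) : (Strip a b)ᵒᵖ ⥤ ModuleCat K :=
  condFunctor a b K (fun u => u = w) (fun _ _ _ h1 h2 hu hu'' => simpleCond_convex h1 h2 hu hu'')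

variable {a b K}

/-- The structure map `G(y) → G(x)` of a functor, for `x ≤ y` in `M`. -/
def seqMap (G : (Strip a b)ᵒᵖ ⥤ ModuleCat K) {x y : Strip a b} (h : x ≤ y) :
    G.obj (op y) ⟶ G.obj (op x) :=
  G.map (homOfLE h).op

variable (a b K)

/-- Pointwise finite-dimensionality. -/
def Pfd (G : (Strip a b)ᵒᵖ ⥤ ModuleCat K) : Prop :=
  ∀ u : Strip a b, FiniteDimensional K (G.obj (op u))

/-- Vanishing on the boundary `∂M`. -/
def VanishesOnBoundary (G : (Strip a b)ᵒᵖ ⥤ ModuleCat K) : Prop :=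
  ∀ u : Strip a b, OnBoundary u → ∀ x : G.obj (op u), x = 0

/-- Sequential continuity: for every increasing sequence `u_k` converging to `L`, the
natural map `G L → lim_k G (u k)` is an isomorphism; elementarily, every compatible
family lifts uniquely. -/
def SeqContinuousF (G : (Strip a b)ᵒᵖ ⥤ ModuleCat K) : Prop :=
  ∀ (u : ℕ → Strip a b) (hu : Monotone u) (L : Strip a b) (hle : ∀ k, u k ≤ L),
    Filter.Tendsto (fun k => (u k).1) Filter.atTop (nhds L.1) →
    ∀ x : ∀ k, G.obj (op (u k)),
      (∀ k, seqMap G (hu (Nat.le_succ k)) (x (k + 1)) = x k) →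
      ∃! y : G.obj (op L), ∀ k, seqMap G (hle k) y = x k

/-- Cohomologicality: the long sequences associated to axis-aligned rectangles with one
corner on `l₁` are exact. -/
def Cohomological (G : (Strip a b)ᵒᵖ ⥤ ModuleCat K) : Prop :=
  VanishesOnBoundary a b K G ∧
  ∀ (u v w : Strip a b) (h : IsCohomRect a b u v w) (n : ℤ),
    (Function.Exact
        (seqMap G (((glideEquiv ^ n : Strip a b ≃o Strip a b)).monotone h.w_le_glide))
        (seqMap G (((glideEquiv ^ n : Strip a b ≃o Strip a b)).monotone h.2.1))) ∧
    (Function.Exact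
        (seqMap G (((glideEquiv ^ n : Strip a b ≃o Strip a b)).monotone h.2.1))
        (seqMap G (((glideEquiv ^ n : Strip a b ≃o Strip a b)).monotone h.1))) ∧
    (Function.Exact
        (seqMap G (((glideEquiv ^ n : Strip a b ≃o Strip a b)).monotone h.1))
        (seqMap G (((glideEquiv ^ n : Strip a b ≃o Strip a b)).monotone h.glideInv_le)))

/-- Bounded above support: the support is contained in the downset `{y - x ≤ c}`. -/
def BddAboveSupport (G : (Strip a b)ᵒᵖ ⥤ ModuleCat K) : Prop :=
  ∃ c : ℝ, ∀ u : Strip a b, c < u.1.2 - u.1.1 → ∀ x : G.obj (op u), x = 0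

/-- Membership in the category `𝒥` of pfd, cohomological, sequentially continuous functors
with bounded above support. -/
def MemJ (G : (Strip a b)ᵒᵖ ⥤ ModuleCat K) : Prop :=
  Pfd a b K G ∧ Cohomological a b K G ∧ SeqContinuousF a b K G ∧ BddAboveSupport a b K G

/-- `𝒥`-presentability. -/
def JPresentable (G : (Strip a b)ᵒᵖ ⥤ ModuleCat K) : Prop :=
  ∃ (H P : (Strip a b)ᵒᵖ ⥤ ModuleCat K) (_ : MemJ a b K H) (_ : MemJ a b K P)
    (f : H ⟶ P) (g : P ⟶ G),
      (∀ u : (Strip a b)ᵒᵖ, Function.Exact (f.app u) (g.app u)) ∧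
      (∀ u : (Strip a b)ᵒᵖ, Function.Surjective (g.app u))

/-- The 0-th Betti function `β⁰(G) : int M → ℕ`, `u ↦ dim Nat(G, S_u)`. -/
def beta0 (G : (Strip a b)ᵒᵖ ⥤ ModuleCat K) (v : Strip a b) : ℕ :=
  if InInterior v then Module.finrank K (G ⟶ SimpleF a b K v) else 0

/-- Admissible Betti functions. -/
def AdmissibleBetti (β : Strip a b → ℕ) : Prop :=
  (∀ v, ¬ InInterior v → β v = 0) ∧
  (∃ c : ℝ, ∀ v : Strip a b, c < v.1.2 - v.1.1 → β v = 0) ∧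
  (∀ u : Strip a b, {v : Strip a b | BlockCond v u ∧ β v ≠ 0}.Finite)

/-- Admissible Euler functions. -/
def AdmissibleEuler (μ : Strip a b → ℤ) : Prop :=
  AdmissibleBetti a b (fun v => (μ v).natAbs)

end Functors

section More

open Strip DirectSum

variable (a b : ℝ) (K : Type) [Field K]

attribute [local instance] Classical.propDecidable

lemma condMap_comp (P : Strip a b → Prop)
    (hconv : ∀ ⦃u u' u'' : Strip a b⦄, u ≤ u' → u' ≤ u'' → P u → P u'' → P u')
    {u u' u'' : Strip a b} (h1 : u ≤ u') (h2 : u' ≤ u'') :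
    condMap a b K P u u'' =
      (condMap a b K P u u').comp (condMap a b K P u' u'') := by
  refine LinearMap.ext fun f => funext fun h => ?_
  by_cases hx : P u''
  · have hy : P u' := hconv h1 h2 h.down hx
    simp [hx, hy]
  · by_cases hy : P u' <;> simp [hx, hy]

/-- A direct sum of `condFunctor`s for an indexed family of supports. -/
def condSumFunctor (ι : Type) (P : ι → Strip a b → Prop)
    (hconv : ∀ i, ∀ ⦃u u' u'' : Strip a b⦄, u ≤ u' → u' ≤ u'' → P i u → P i u'' → P i u') :
    (Strip a b)ᵒᵖ ⥤ ModuleCat K where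
  obj u := ModuleCat.of K (⨁ i : ι, (PLift (P i u.unop) → K))
  map {x y} f := ModuleCat.ofHom
    (DFinsupp.mapRange.linearMap (fun i => condMap a b K (P i) y.unop x.unop))
  map_id x := by
    have e : (fun i => condMap a b K (P i) x.unop x.unop)
        = fun i : ι => (LinearMap.id : (PLift (P i x.unop) → K) →ₗ[K] _) := by
      funext i
      refine LinearMap.ext fun f => funext fun h => ?_
      show (if h' : P i x.unop then f ⟨h'⟩ else 0) = f h
      rw [dif_pos h.down]
    change ModuleCat.ofHom
      (DFinsupp.mapRange.linearMap fun i => condMap a b K (P i) x.unop x.unop) = _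
    rw [e, DFinsupp.mapRange.linearMap_id]
    rfl
  map_comp {x y z} f g := by
    have e : (fun i => condMap a b K (P i) z.unop x.unop)
        = fun i => (condMap a b K (P i) z.unop y.unop).comp
            (condMap a b K (P i) y.unop x.unop) := by
      funext i
      exact condMap_comp a b K (P i) (hconv i) (leOfHom g.unop) (leOfHom f.unop)
    change ModuleCat.ofHom
      (DFinsupp.mapRange.linearMap fun i => condMap a b K (P i) z.unop x.unop) = _
    rw [e, DFinsupp.mapRange.linearMap_comp]
    rfl

/-- The direct sum `⊕_{v} B_v^{m v}` of contravariant blocks with multiplicities `m`. -/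
def blockSum (m : Strip a b → ℕ) : (Strip a b)ᵒᵖ ⥤ ModuleCat K :=
  condSumFunctor a b K (Σ v : Strip a b, Fin (m v)) (fun s u => BlockCond s.1 u)
    (fun _ _ _ _ h1 h2 hu hu'' => blockCond_convex h1 h2 hu hu'')

/-- The pointwise direct sum of a sequence of functors. -/
def sumFunctor (Q : ℕ → (Strip a b)ᵒᵖ ⥤ ModuleCat K) :
    (Strip a b)ᵒᵖ ⥤ ModuleCat K where
  obj u := ModuleCat.of K (⨁ n : ℕ, (Q n).obj u)
  map {x y} f := ModuleCat.ofHom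
    (DFinsupp.mapRange.linearMap (fun n => ((Q n).map f).hom))
  map_id x := by
    have e : (fun n => ((Q n).map (𝟙 x)).hom)
        = fun n : ℕ => LinearMap.id := by
      funext n; rw [CategoryTheory.Functor.map_id]; rfl
    change ModuleCat.ofHom (DFinsupp.mapRange.linearMap
      fun n => ((Q n).map (𝟙 x)).hom) = _
    rw [e, DFinsupp.mapRange.linearMap_id]
    rfl
  map_comp {x y z} f g := by
    have e : (fun n => ((Q n).map (f ≫ g)).hom)
        = fun n => (((Q n).map g).hom.comp
            ((Q n).map f).hom) := by
      funext n; rw [CategoryTheory.Functor.map_comp]; rfl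
    change ModuleCat.ofHom (DFinsupp.mapRange.linearMap
      fun n => ((Q n).map (f ≫ g)).hom) = _
    rw [e, DFinsupp.mapRange.linearMap_comp]
    rfl

/-- Precomposition with the glide reflection `T`, as an endofunctor of `Mᵒᵖ`. -/
def Tfun : (Strip a b)ᵒᵖ ⥤ (Strip a b)ᵒᵖ :=
  ((glideEquiv (a := a) (b := b)).monotone.functor).op

/-- A resolution of `G` by functors in `𝒥` (hence a projective resolution in `𝒞`). -/
def IsJResolution (G : (Strip a b)ᵒᵖ ⥤ ModuleCat K)
    (P : ℕ → (Strip a b)ᵒᵖ ⥤ ModuleCat K)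
    (d : ∀ n, P (n + 1) ⟶ P n) (ε : P 0 ⟶ G) : Prop :=
  (∀ n, MemJ a b K (P n)) ∧
  (∀ u, Function.Surjective ((ε.app u))) ∧
  (∀ u, Function.Exact ((d 0).app u) (ε.app u)) ∧
  (∀ n u, Function.Exact ((d (n + 1)).app u) ((d n).app u))

/-- Equivariance of a resolution: `P (n+3) = P n ∘ T` and `d (n+3) = - d n ∘ T`. -/
def IsEquivariantRes (P : ℕ → (Strip a b)ᵒᵖ ⥤ ModuleCat K)
    (d : ∀ n, P (n + 1) ⟶ P n) : Prop :=
  ∃ hEq : ∀ n, P (n + 3) = Tfun a b ⋙ P n,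
    ∀ n, d (n + 3) =
      eqToHom (hEq (n + 1)) ≫ (-(Functor.whiskerLeft (Tfun a b) (d n))) ≫ eqToHom (hEq n).symm

/-- The cochain complex `Nat(P_•, S_v)` obtained by applying `Nat(-, S_v)` to a resolution. -/
def dStar (P : ℕ → (Strip a b)ᵒᵖ ⥤ ModuleCat K) (d : ∀ n, P (n + 1) ⟶ P n)
    (v : Strip a b) (n : ℕ) :
    (P n ⟶ SimpleF a b K v) →ₗ[K] (P (n + 1) ⟶ SimpleF a b K v) :=
  Linear.leftComp K (SimpleF a b K v) (d n)

/-- `dim_K Extⁿ_𝒞(G, S_v)`, computed as the `n`-th cohomology of `Nat(P_•, S_v)` for a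
projective resolution `P_•` of `G` in `𝒞`. -/
def extDim (P : ℕ → (Strip a b)ᵒᵖ ⥤ ModuleCat K) (d : ∀ n, P (n + 1) ⟶ P n)
    (v : Strip a b) : ℕ → ℕ
  | 0 => Module.finrank K (LinearMap.ker (dStar a b K P d v 0))
  | (n + 1) =>
      Module.finrank K
        (↥(LinearMap.ker (dStar a b K P d v (n + 1))) ⧸
          Submodule.comap (LinearMap.ker (dStar a b K P d v (n + 1))).subtype
            (LinearMap.range (dStar a b K P d v n)))

/-- The partial alternating sum `Σ_{n < N} (-1)ⁿ dim Extⁿ(F, S_v)`. -/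
def eulerAt (P : ℕ → (Strip a b)ᵒᵖ ⥤ ModuleCat K) (d : ∀ n, P (n + 1) ⟶ P n)
    (v : Strip a b) (N : ℕ) : ℤ :=
  ∑ n ∈ Finset.range N, (-1 : ℤ) ^ n * (extDim a b K P d v n : ℤ)

/-- Objects of `𝒥`. -/
def JObj : Type 1 := {G : (Strip a b)ᵒᵖ ⥤ ModuleCat.{0} K // MemJ a b K G}

/-- Objects of `pres(𝒥)`. -/
def PresObj : Type 1 := {G : (Strip a b)ᵒᵖ ⥤ ModuleCat.{0} K // JPresentable a b K G}

/-- Relations defining `K₀` of `𝒥`: `[Q] = [P] + [R]` for every (automatically split)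
short exact sequence `0 → P → Q → R → 0` in `𝒥`. -/
def K0JRelations : Set (FreeAbelianGroup (JObj a b K)) :=
  {x | ∃ (P Q R : JObj a b K) (κ : P.1 ⟶ Q.1) (ρ : Q.1 ⟶ R.1),
    (∀ u, Function.Injective (κ.app u)) ∧ (∀ u, Function.Surjective (ρ.app u)) ∧
    (∀ u, Function.Exact (κ.app u) (ρ.app u)) ∧
    x = FreeAbelianGroup.of Q - FreeAbelianGroup.of P - FreeAbelianGroup.of R}

/-- The Grothendieck group `K₀(𝒥)`. -/
def K0J : Type 1 :=
  FreeAbelianGroup (JObj a b K) ⧸ AddSubgroup.closure (K0JRelations a b K)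

instance : AddCommGroup (K0J a b K) := by unfold K0J; infer_instance

/-- The class `[G] ∈ K₀(𝒥)`. -/
def K0Jmk (G : JObj a b K) : K0J a b K :=
  QuotientAddGroup.mk (FreeAbelianGroup.of G)

/-- Relations defining `K₀` of `pres(𝒥)`: `[Q] = [P] + [R]` for every short exact
sequence `0 → P → Q → R → 0` of `𝒥`-presentable functors. -/
def K0PresRelations : Set (FreeAbelianGroup (PresObj a b K)) :=
  {x | ∃ (P Q R : PresObj a b K) (κ : P.1 ⟶ Q.1) (ρ : Q.1 ⟶ R.1),
    (∀ u, Function.Injective (κ.app u)) ∧ (∀ u, Function.Surjective (ρ.app u)) ∧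
    (∀ u, Function.Exact (κ.app u) (ρ.app u)) ∧
    x = FreeAbelianGroup.of Q - FreeAbelianGroup.of P - FreeAbelianGroup.of R}

/-- The Grothendieck group `K₀(pres 𝒥)`. -/
def K0Pres : Type 1 :=
  FreeAbelianGroup (PresObj a b K) ⧸ AddSubgroup.closure (K0PresRelations a b K)

instance : AddCommGroup (K0Pres a b K) := by unfold K0Pres; infer_instance

/-- The class `[G] ∈ K₀(pres 𝒥)`. -/
def K0PresMk (G : PresObj a b K) : K0Pres a b K :=
  QuotientAddGroup.mk (FreeAbelianGroup.of G)

/-- The abelian group `G(𝔹)` of admissible Euler functions. -/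
def eulerGroup : AddSubgroup (Strip a b → ℤ) where
  carrier := {μ | AdmissibleEuler a b μ}
  zero_mem' := by
    refine ⟨fun v _ => rfl, ⟨0, fun v _ => rfl⟩, fun u => ?_⟩
    convert Set.finite_empty
    ext v; simp
  add_mem' := by
    rintro μ ν ⟨h1, ⟨c1, h2⟩, h3⟩ ⟨h1', ⟨c2, h2'⟩, h3'⟩
    refine ⟨fun v hv => ?_, ⟨max c1 c2, fun v hv => ?_⟩, fun u => ?_⟩
    · simp only [Pi.add_apply]
      rw [show μ v = 0 by simpa using h1 v hv, show ν v = 0 by simpa using h1' v hv]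
      rfl
    · simp only [Pi.add_apply]
      rw [show μ v = 0 by simpa using h2 v (lt_of_le_of_lt (le_max_left _ _) hv),
        show ν v = 0 by simpa using h2' v (lt_of_le_of_lt (le_max_right _ _) hv)]
      rfl
    · refine Set.Finite.subset ((h3 u).union (h3' u)) ?_
      rintro v ⟨hb, hne⟩
      by_cases hμ : μ v = 0
      · exact Or.inr ⟨hb, by simp only [Pi.add_apply, hμ, zero_add] at hne; simpa using hne⟩
      · exact Or.inl ⟨hb, by simpa using hμ⟩
  neg_mem' := by
    rintro μ ⟨h1, h2, h3⟩
    refine ⟨fun v hv => ?_, ?_, fun u => ?_⟩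
    · simp only [Pi.neg_apply, Int.natAbs_neg]; exact h1 v hv
    · obtain ⟨c, hc⟩ := h2
      exact ⟨c, fun v hv => by simp only [Pi.neg_apply, Int.natAbs_neg]; exact hc v hv⟩
    · refine Set.Finite.subset (h3 u) ?_
      rintro v ⟨hb, hne⟩
      exact ⟨hb, by simpa [Int.natAbs_neg] using hne⟩

/-- Subfunctors of a functor `G : Mᵒᵖ ⥤ Vect_K`. -/
def Subfunctor (G : (Strip a b)ᵒᵖ ⥤ ModuleCat K) : Type :=
  {S : ∀ u : Strip a b, Submodule K (G.obj (op u)) //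
    ∀ (u u' : Strip a b) (h : u' ≤ u), Submodule.map (seqMap G h).hom (S u) ≤ S u'}

end More

end




open CategoryTheory CategoryTheory.Limits Opposite Strip

noncomputable section

namespace BlockAux

attribute [local instance] Classical.propDecidable

variable {a b : ℝ}

lemma blockCond_iff (v u : Strip a b) :
    BlockCond v u ↔ v.1.1 ≤ u.1.1 ∧ u.1.2 ≤ v.1.2 ∧ u.1.1 < b - v.1.2 ∧ a - v.1.1 < u.1.2 := by
  constructor
  · rintro ⟨⟨h1, h2⟩, h3, h4⟩; exact ⟨h1, h2, h3, h4⟩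
  · rintro ⟨h1, h2, h3, h4⟩; exact ⟨⟨h1, h2⟩, h3, h4⟩

lemma blockCond_glide_iff (v u : Strip a b) :
    BlockCond v (glideEquiv u) ↔ BlockCond (glideEquiv.symm v) u := by
  have hc : (glideEquiv u).1 = (a - u.1.2, b - u.1.1) := glideEquiv_coords u
  have hs : (glideEquiv.symm v).1 = (b - v.1.2, a - v.1.1) := glideEquiv_symm_coords v
  rw [blockCond_iff, blockCond_iff, hc, hs]
  dsimp only
  constructor <;> rintro ⟨h1, h2, h3, h4⟩ <;>
    exact ⟨by linarith, by linarith, by linarith, by linarith⟩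

lemma blockCond_glide_symm_iff (v u : Strip a b) :
    BlockCond v (glideEquiv.symm u) ↔ BlockCond (glideEquiv v) u := by
  have h := blockCond_glide_iff (glideEquiv v) (glideEquiv.symm u)
  rw [OrderIso.apply_symm_apply, OrderIso.symm_apply_apply] at h
  exact h.symm

section Zpow

variable {a b : ℝ}

lemma glide_inv_eq_symm : (glideEquiv⁻¹ : Strip a b ≃o Strip a b) = glideEquiv.symm := rfl

lemma blockCond_zpow_iff (n : ℤ) (v u : Strip a b) :
    BlockCond v ((glideEquiv ^ n : Strip a b ≃o Strip a b) u) ↔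
    BlockCond ((glideEquiv ^ (-n) : Strip a b ≃o Strip a b) v) u := by
  induction n using Int.induction_on generalizing v u with
  | zero => simp
  | succ n ih =>
      have e1 : ((glideEquiv : Strip a b ≃o Strip a b) ^ ((n : ℤ) + 1)) u
          = (glideEquiv ^ (n : ℤ)) (glideEquiv u) := by
        rw [zpow_add_one]; rfl
      have e2 : ∀ w : Strip a b, ((glideEquiv : Strip a b ≃o Strip a b) ^ (-((n : ℤ) + 1))) w
          = glideEquiv.symm ((glideEquiv ^ (-(n : ℤ))) w) := by
        intro w
        have h : (-((n : ℤ) + 1)) = -1 + -(n : ℤ) := by ring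
        rw [h, zpow_add, zpow_neg_one]; rfl
      rw [e1, ih, blockCond_glide_iff, e2]
  | pred n ih =>
      have e1 : ((glideEquiv : Strip a b ≃o Strip a b) ^ (-(n : ℤ) - 1)) u
          = (glideEquiv ^ (-(n : ℤ))) (glideEquiv.symm u) := by
        have h : (-(n : ℤ) - 1) = -(n : ℤ) + -1 := by ring
        rw [h, zpow_add, zpow_neg_one]; rfl
      have e2 : ∀ w : Strip a b, ((glideEquiv : Strip a b ≃o Strip a b) ^ (-(-(n : ℤ) - 1))) w
          = glideEquiv ((glideEquiv ^ ((n : ℤ))) w) := by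
        intro w
        have h : (-(-(n : ℤ) - 1)) = 1 + (n : ℤ) := by ring
        rw [h, zpow_add, zpow_one]; rfl
      simp only [neg_neg] at ih e2 ⊢
      rw [e1, ih, blockCond_glide_symm_iff, e2]

end Zpow


lemma block_pattern (v₀ : Strip a b) {u v w : Strip a b} (h : IsCohomRect a b u v w) :
    (BlockCond v₀ w → (BlockCond v₀ v ↔ ¬ BlockCond v₀ (glideEquiv u))) ∧
    (BlockCond v₀ v → (BlockCond v₀ u ↔ ¬ BlockCond v₀ w)) ∧
    (BlockCond v₀ u → (BlockCond v₀ (glideEquiv.symm w) ↔ ¬ BlockCond v₀ v)) := by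
  obtain ⟨⟨huv1, huv2⟩, ⟨hvw1, hvw2⟩, hcase⟩ := h
  obtain ⟨hu1, hu2⟩ := u.2
  obtain ⟨hv1, hv2⟩ := v.2
  obtain ⟨hw1, hw2⟩ := w.2
  have hTu : (glideEquiv u).1 = (a - u.1.2, b - u.1.1) := glideEquiv_coords u
  have hTw : (glideEquiv.symm w).1 = (b - w.1.2, a - w.1.1) := glideEquiv_symm_coords w
  simp only [blockCond_iff, hTu, hTw]
  rcases hcase with ⟨e1, e2, e3⟩ | ⟨e1, e2, e3⟩
  · -- degenerate case: corner condition forces everything onto l₁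
    refine ⟨fun hw => absurd hw ?_, fun hv => absurd hv ?_, fun hu => absurd hu ?_⟩ <;>
      rintro ⟨c1, c2, c3, c4⟩ <;> linarith
  · constructor
    · rintro ⟨c1, c2, c3, c4⟩
      constructor
      · rintro ⟨d1, d2, d3, d4⟩ ⟨f1, f2, f3, f4⟩
        linarith
      · intro hn
        refine ⟨by linarith, by linarith, by linarith, ?_⟩
        by_contra hq
        push_neg at hq
        exact hn ⟨by linarith, by linarith, by linarith, by linarith⟩
    constructor
    · rintro ⟨c1, c2, c3, c4⟩
      constructor
      · rintro ⟨d1, d2, d3, d4⟩ ⟨f1, f2, f3, f4⟩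
        linarith
      · intro hn
        refine ⟨by linarith, by linarith, ?_, by linarith⟩
        by_contra hq
        push_neg at hq
        exact hn ⟨by linarith, by linarith, by linarith, by linarith⟩
    · rintro ⟨c1, c2, c3, c4⟩
      constructor
      · rintro ⟨d1, d2, d3, d4⟩ ⟨f1, f2, f3, f4⟩
        linarith
      · intro hn
        refine ⟨by linarith, by linarith, by linarith, ?_⟩
        by_contra hq
        push_neg at hq
        exact hn ⟨by linarith, by linarith, by linarith, by linarith⟩


section ExactAux

variable {a b : ℝ} (K : Type) [Field K]

lemma plift_subsingleton {P : Prop} (hP : ¬ P) : ∀ f g : PLift P → K, f = g := by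
  intro f g; funext h; exact absurd h.down hP

lemma condMap_exact (P : Strip a b → Prop) (x y z : Strip a b)
    (hpat : P y → (P x ↔ ¬ P z)) :
    Function.Exact (condMap a b K P y z) (condMap a b K P x y) := by
  intro f₀
  by_cases hy : P y
  · by_cases hx : P x
    · have hz : ¬ P z := (hpat hy).mp hx
      constructor
      · intro h0
        have h1 : f₀ ⟨hy⟩ = 0 := by
          have := congrFun h0 ⟨hx⟩
          simpa [condMap, hy] using this
        refine ⟨0, ?_⟩
        funext h
        have : h = ⟨hy⟩ := Subsingleton.elim _ _
        simp [condMap, hz, this, h1]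
      · rintro ⟨e, rfl⟩
        funext h
        simp [condMap, hz, hy]
    · have hz : P z := by
        by_contra hz
        exact hx ((hpat hy).mpr hz)
      constructor
      · intro _
        refine ⟨fun _ => f₀ ⟨hy⟩, ?_⟩
        funext h
        have : h = ⟨hy⟩ := Subsingleton.elim _ _
        simp [condMap, hz, this]
      · intro _
        exact plift_subsingleton K hx _ _
  · constructor
    · intro _
      refine ⟨0, ?_⟩
      have : f₀ = 0 := plift_subsingleton K hy _ _
      rw [this, map_zero]
    · intro _
      have : f₀ = 0 := plift_subsingleton K hy _ _
      rw [this, map_zero]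

lemma mapRange_exact {ι : Type} {A B C : ι → Type}
    [∀ i, AddCommGroup (A i)] [∀ i, Module K (A i)]
    [∀ i, AddCommGroup (B i)] [∀ i, Module K (B i)]
    [∀ i, AddCommGroup (C i)] [∀ i, Module K (C i)]
    (f : ∀ i, A i →ₗ[K] B i) (g : ∀ i, B i →ₗ[K] C i)
    (h : ∀ i, Function.Exact (f i) (g i)) :
    Function.Exact (DFinsupp.mapRange.linearMap f) (DFinsupp.mapRange.linearMap g) := by
  intro x
  constructor
  · intro h0
    have hcomp : ∀ i, g i (x i) = 0 := by
      intro i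
      have := congrArg (fun t => t i) h0
      simpa [DFinsupp.mapRange.linearMap_apply, DFinsupp.mapRange_apply] using this
    have hex : ∀ i, ∃ e : A i, f i e = x i := by
      intro i
      obtain ⟨e, he⟩ := (h i (x i)).mp (hcomp i)
      exact ⟨e, he⟩
    classical
    refine ⟨DFinsupp.mk x.support (fun i => Classical.choose (hex i.1)), ?_⟩
    ext i
    simp only [DFinsupp.mapRange.linearMap_apply, LinearMap.coe_mk, AddHom.coe_mk,
      DFinsupp.mapRange_apply]
    by_cases hi : i ∈ x.support
    · rw [DFinsupp.mk_apply, dif_pos hi]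
      exact Classical.choose_spec (hex i)
    · rw [DFinsupp.mk_apply, dif_neg hi, map_zero]
      exact (DFinsupp.notMem_support_iff.mp hi).symm
  · rintro ⟨y, rfl⟩
    ext i
    simp only [DFinsupp.mapRange.linearMap_apply, LinearMap.coe_mk, AddHom.coe_mk,
      DFinsupp.mapRange_apply, DFinsupp.zero_apply]
    exact (h i).apply_apply_eq_zero (y i)


lemma fd_dfinsupp {ι : Type} (M : ι → Type)
    [∀ i, AddCommGroup (M i)] [∀ i, Module K (M i)]
    [∀ i, FiniteDimensional K (M i)] (S : Set ι) (hS : S.Finite)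
    (h0 : ∀ i, i ∉ S → ∀ x : M i, x = 0) : FiniteDimensional K (DirectSum ι M) := by
  classical
  haveI : Fintype ↥S := hS.fintype
  let Φ : (∀ i : S, M i.1) →ₗ[K] DirectSum ι M :=
    ∑ i : S, (DirectSum.lof K ι M i.1).comp (LinearMap.proj i)
  have hsurj : Function.Surjective Φ := by
    intro x
    induction x using DirectSum.induction_on with
    | zero => exact ⟨0, map_zero Φ⟩
    | of i m =>
        by_cases hi : i ∈ S
        · set p : ∀ j : S, M j.1 := Pi.single (⟨i, hi⟩ : S) m with hp
          refine ⟨p, ?_⟩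
          have : Φ p = ∑ j : S, DirectSum.lof K ι M j.1 (p j) := by
            simp [Φ, LinearMap.sum_apply]
          rw [this, Finset.sum_eq_single (⟨i, hi⟩ : S)]
          · rw [hp, Pi.single_eq_same, DirectSum.lof_eq_of]
          · intro j _ hj
            rw [hp, Pi.single_eq_of_ne hj, map_zero]
          · intro hmem
            exact absurd (Finset.mem_univ _) hmem
        · refine ⟨0, ?_⟩
          rw [map_zero, h0 i hi m, map_zero]
    | add x y hx hy =>
        obtain ⟨x', hx'⟩ := hx
        obtain ⟨y', hy'⟩ := hy
        exact ⟨x' + y', by rw [map_add, hx', hy']⟩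
  exact Module.Finite.of_surjective Φ hsurj


lemma cond_seq_lift (v₀ : Strip a b) (u : ℕ → Strip a b) (hu : Monotone u) (L : Strip a b)
    (hle : ∀ k, u k ≤ L)
    (htend : Filter.Tendsto (fun k => (u k).1) Filter.atTop (nhds L.1))
    (x : ∀ k, PLift (BlockCond v₀ (u k)) → K)
    (hx : ∀ k, condMap a b K (BlockCond v₀) (u k) (u (k + 1)) (x (k + 1)) = x k) :
    ∃! y : PLift (BlockCond v₀ L) → K,
      ∀ k, condMap a b K (BlockCond v₀) (u k) L y = x k := by
  classical
  have htend1 : Filter.Tendsto (fun k => (u k).1.1) Filter.atTop (nhds L.1.1) :=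
    (continuous_fst.tendsto L.1).comp htend
  have htend2 : Filter.Tendsto (fun k => (u k).1.2) Filter.atTop (nhds L.1.2) :=
    (continuous_snd.tendsto L.1).comp htend
  have step : ∀ k (hk1 : BlockCond v₀ (u k)) (hk2 : BlockCond v₀ (u (k + 1))),
      x k ⟨hk1⟩ = x (k + 1) ⟨hk2⟩ := by
    intro k hk1 hk2
    have e := congrFun (hx k) ⟨hk1⟩
    rw [condMap_apply, dif_pos hk2] at e
    exact e.symm
  have chain : ∀ m k, k ≤ m → (∀ j, k ≤ j → j ≤ m → BlockCond v₀ (u j)) →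
      ∀ (h : PLift (BlockCond v₀ (u k))) (h' : PLift (BlockCond v₀ (u m))),
        x k h = x m h' := by
    intro m
    induction m with
    | zero =>
        intro k hk _ h h'
        have hk0 : k = 0 := Nat.le_zero.mp hk
        subst hk0
        rw [Subsingleton.elim h h']
    | succ m ih =>
        intro k hk hall h h'
        rcases Nat.lt_or_ge k (m + 1) with hlt | hge
        · have hkm : k ≤ m := Nat.lt_succ_iff.mp hlt
          have hm : BlockCond v₀ (u m) := hall m hkm (Nat.le_succ m)
          have e1 : x k h = x m ⟨hm⟩ :=
            ih k hkm (fun j hj1 hj2 => hall j hj1 (le_trans hj2 (Nat.le_succ m))) h ⟨hm⟩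
          have e2 := step m hm h'.down
          rw [e1, e2]
        · have hk1 : k = m + 1 := le_antisymm hk hge
          subst hk1
          rw [Subsingleton.elim h h']
  by_cases hL : BlockCond v₀ L
  · obtain ⟨hc1, hc2, hc3, hc4⟩ := (blockCond_iff v₀ L).mp hL
    have hev : ∀ᶠ k in Filter.atTop, BlockCond v₀ (u k) := by
      filter_upwards [htend1.eventually_lt_const hc3, htend2.eventually_const_lt hc4]
        with k h3 h4
      exact (blockCond_iff v₀ (u k)).mpr
        ⟨le_trans hc1 (hle k).1, le_trans (hle k).2 hc2, h3, h4⟩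
    obtain ⟨N, hN⟩ := Filter.eventually_atTop.mp hev
    refine ⟨fun _ => x N ⟨hN N le_rfl⟩, ?_, ?_⟩
    · intro k
      funext h
      rw [condMap_apply, dif_pos hL]
      rcases Nat.le_total k N with hkN | hNk
      · exact (chain N k hkN
          (fun j hj1 hj2 => blockCond_convex (hu hj1) (hu hj2) h.down (hN N le_rfl))
          h ⟨hN N le_rfl⟩).symm
      · exact chain k N hNk (fun j hj1 hj2 => hN j hj1) ⟨hN N le_rfl⟩ h
    · intro y' hy'
      funext h
      have e := congrFun (hy' N) ⟨hN N le_rfl⟩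
      rw [condMap_apply, dif_pos hL] at e
      rw [Subsingleton.elim h (⟨hL⟩ : PLift (BlockCond v₀ L))]
      exact e
  · have hzero : ∀ d k (h : PLift (BlockCond v₀ (u k))),
        ¬ BlockCond v₀ (u (k + d)) → x k h = 0 := by
      intro d
      induction d with
      | zero => intro k h hnd; exact absurd h.down hnd
      | succ d ih =>
          intro k h hnd
          have e := congrFun (hx k) h
          rw [condMap_apply] at e
          by_cases h1 : BlockCond v₀ (u (k + 1))
          · rw [dif_pos h1] at e
            have : ¬ BlockCond v₀ (u (k + 1 + d)) := by
              rwa [show k + 1 + d = k + (d + 1) by omega]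
            rw [← e, ih (k + 1) ⟨h1⟩ this]
          · rw [dif_neg h1] at e
            exact e.symm
    have hnotall : ∀ k, BlockCond v₀ (u k) → ∃ d, ¬ BlockCond v₀ (u (k + d)) := by
      intro k hk
      by_contra hcon
      push_neg at hcon
      have hall : ∀ j, k ≤ j → BlockCond v₀ (u j) := by
        intro j hj
        have := hcon (j - k)
        rwa [show k + (j - k) = j by omega] at this
      apply hL
      refine (blockCond_iff v₀ L).mpr ⟨?_, ?_, ?_, ?_⟩
      · refine ge_of_tendsto htend1 ?_
        exact Filter.eventually_atTop.mpr
          ⟨k, fun j hj => ((blockCond_iff v₀ (u j)).mp (hall j hj)).1⟩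
      · refine le_of_tendsto htend2 ?_
        exact Filter.eventually_atTop.mpr
          ⟨k, fun j hj => ((blockCond_iff v₀ (u j)).mp (hall j hj)).2.1⟩
      · exact lt_of_le_of_lt (hle k).1 ((blockCond_iff v₀ (u k)).mp hk).2.2.1
      · exact lt_of_lt_of_le ((blockCond_iff v₀ (u k)).mp hk).2.2.2 (hle k).2
    refine ⟨0, ?_, ?_⟩
    · intro k
      rw [map_zero]
      funext h
      obtain ⟨d, hd⟩ := hnotall k h.down
      exact (hzero d k h hd).symm
    · intro y' _
      exact plift_subsingleton K hL y' 0


lemma sigma_blockCond_finite (m : Strip a b → ℕ) (u : Strip a b)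
    (hfin : {v : Strip a b | BlockCond v u ∧ m v ≠ 0}.Finite) :
    {s : Σ v : Strip a b, Fin (m v) | BlockCond s.1 u}.Finite := by
  haveI := hfin.to_subtype
  let F : (Σ v' : {v : Strip a b | BlockCond v u ∧ m v ≠ 0}, Fin (m v'.1)) →
      Σ v : Strip a b, Fin (m v) := fun t => ⟨t.1.1, t.2⟩
  refine (Set.finite_range F).subset ?_
  rintro ⟨v, i⟩ hs
  exact ⟨⟨⟨v, hs, Nat.pos_iff_ne_zero.mp i.pos⟩, i⟩, rfl⟩

lemma blockCond_not_boundary (v u : Strip a b) (h : OnBoundary u) : ¬ BlockCond v u := by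
  rintro ⟨⟨h1, h2⟩, h3, h4⟩
  rcases h with h | h <;> linarith

lemma dfinsupp_eq_zero {ι : Type} {P : ι → Prop}
    (x : DirectSum ι (fun s => PLift (P s) → K)) (h : ∀ s, ¬ P s) : x = 0 :=
  DFinsupp.ext fun s => plift_subsingleton K (h s) _ _

end ExactAux

end BlockAux


open CategoryTheory CategoryTheory.Limits Opposite Strip BlockAux

noncomputable section

attribute [local instance] Classical.propDecidable

/-- for an admissible Betti function `m`, the direct sum
`⊕_{v} B_v^{m v}` is pfd, cohomological, sequentially continuous and has bounded above
support, i.e. it lies in `𝒥`. -/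
theorem blockSum_memJ (a b : ℝ) (K : Type) [Field K]
    (m : Strip a b → ℕ) (hm : AdmissibleBetti a b m) :
    MemJ a b K (blockSum a b K m) := by
  classical
  obtain ⟨hm1, ⟨c, hc⟩, hm3⟩ := hm
  have hmap : ∀ (p q : Strip a b) (hpq : p ≤ q),
      seqMap (blockSum a b K m) hpq =
        ModuleCat.ofHom (DFinsupp.mapRange.linearMap
          (fun s : Σ v : Strip a b, Fin (m v) => condMap a b K (BlockCond s.1) p q)) :=
    fun _ _ _ => rfl
  refine ⟨?_, ⟨?_, ?_⟩, ?_, ?_⟩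
  · -- Pfd
    intro u
    show FiniteDimensional K (DirectSum (Σ v : Strip a b, Fin (m v))
      (fun s => PLift (BlockCond s.1 u) → K))
    haveI : ∀ s : Σ v : Strip a b, Fin (m v),
        FiniteDimensional K (PLift (BlockCond s.1 u) → K) := by
      intro s
      haveI : Finite (PLift (BlockCond s.1 u)) := Finite.of_subsingleton
      infer_instance
    exact fd_dfinsupp K _ _ (sigma_blockCond_finite m u (hm3 u))
      (fun s hs x => plift_subsingleton K hs x 0)
  · -- VanishesOnBoundary
    intro u hb x
    exact dfinsupp_eq_zero K x (fun s => blockCond_not_boundary s.1 u hb)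
  · -- exactness
    intro u v w h n
    have hpat := fun v' : Strip a b => block_pattern v' h
    refine ⟨?_, ?_, ?_⟩
    · rw [hmap, hmap]
      refine mapRange_exact K _ _ (fun s => condMap_exact K _ _ _ _ ?_)
      rw [blockCond_zpow_iff n s.1, blockCond_zpow_iff n s.1, blockCond_zpow_iff n s.1]
      exact (hpat _).1
    · rw [hmap, hmap]
      refine mapRange_exact K _ _ (fun s => condMap_exact K _ _ _ _ ?_)
      rw [blockCond_zpow_iff n s.1, blockCond_zpow_iff n s.1, blockCond_zpow_iff n s.1]
      exact (hpat _).2.1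
    · rw [hmap, hmap]
      refine mapRange_exact K _ _ (fun s => condMap_exact K _ _ _ _ ?_)
      rw [blockCond_zpow_iff n s.1, blockCond_zpow_iff n s.1, blockCond_zpow_iff n s.1]
      exact (hpat _).2.2
  · -- SeqContinuousF
    intro u hu L hle htend x hx
    let xs : ∀ k, DirectSum (Σ v : Strip a b, Fin (m v))
        (fun s => PLift (BlockCond s.1 (u k)) → K) := x
    have hxs : ∀ (s : Σ v : Strip a b, Fin (m v)) (k : ℕ),
        condMap a b K (BlockCond s.1) (u k) (u (k + 1)) (xs (k + 1) s) = xs k s := by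
      intro s k
      have e : (DFinsupp.mapRange.linearMap
          (fun s : Σ v : Strip a b, Fin (m v) =>
            condMap a b K (BlockCond s.1) (u k) (u (k + 1)))) (xs (k + 1)) = xs k := hx k
      have e2 := congrArg (fun t => t s) e
      simpa [DFinsupp.mapRange.linearMap_apply, DFinsupp.mapRange_apply] using e2
    have hchoice : ∀ s : Σ v : Strip a b, Fin (m v),
        ∃ y : PLift (BlockCond s.1 L) → K,
          (∀ k, condMap a b K (BlockCond s.1) (u k) L y = xs k s) ∧
          ∀ y', (∀ k, condMap a b K (BlockCond s.1) (u k) L y' = xs k s) → y' = y :=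
      fun s => cond_seq_lift K s.1 u hu L hle htend (fun k => xs k s) (hxs s)
    choose f hf hfu using hchoice
    have hLf := sigma_blockCond_finite m L (hm3 L)
    let Y : DirectSum (Σ v : Strip a b, Fin (m v))
        (fun s => PLift (BlockCond s.1 L) → K) :=
      DFinsupp.mk hLf.toFinset (fun s => f s.1)
    have hYs : ∀ s, Y s = f s := by
      intro s
      simp only [Y]
      rw [DFinsupp.mk_apply]
      by_cases hs : s ∈ hLf.toFinset
      · rw [dif_pos hs]
      · rw [dif_neg hs]
        have hns : ¬ BlockCond s.1 L := by
          intro hb; exact hs (hLf.mem_toFinset.mpr hb)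
        exact (plift_subsingleton K hns 0 (f s))
    refine ⟨Y, ?_, ?_⟩
    · intro k
      show (DFinsupp.mapRange.linearMap
          (fun s : Σ v : Strip a b, Fin (m v) => condMap a b K (BlockCond s.1) (u k) L))
          Y = xs k
      refine DFinsupp.ext fun s => ?_
      rw [DFinsupp.mapRange.linearMap_apply]
      simp only [LinearMap.coe_mk, AddHom.coe_mk, DFinsupp.mapRange_apply]
      rw [hYs]
      exact hf s k
    · intro Y' hY'
      let Yd : DirectSum (Σ v : Strip a b, Fin (m v))
          (fun s => PLift (BlockCond s.1 L) → K) := Y'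
      show Yd = Y
      refine DFinsupp.ext fun s => ?_
      rw [hYs]
      refine hfu s (Yd s) fun k => ?_
      have e : (DFinsupp.mapRange.linearMap
          (fun s : Σ v : Strip a b, Fin (m v) =>
            condMap a b K (BlockCond s.1) (u k) L)) Yd = xs k := hY' k
      have e2 := congrArg (fun t => t s) e
      simpa [DFinsupp.mapRange.linearMap_apply, DFinsupp.mapRange_apply] using e2
  · -- BddAboveSupport
    refine ⟨c, fun u hcu x => ?_⟩
    refine dfinsupp_eq_zero K x (fun s => ?_)
    rintro ⟨⟨h1, h2⟩, _, _⟩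
    have hzero : m s.1 = 0 := hc s.1 (by linarith)
    exact absurd s.2.isLt (by omega)
end
end
end

section
/- Let F be a J-presentable functor admitting an equivariant projective resolution (P_•, δ_•), i.e. P_{n+3} = P_n ∘ T and δ_{n+3} = −δ_n ∘ T for all n ≥ 0. Then β^{n+3}(F) = β^n(F) ∘ T for all n ≥ 1, and consequently for every u ∈ int M, β^n(F)(u) = 0 for all but finitely many n, so the Euler function χ(F)(u) = Σ_{n≥0} (−1)^n dim Ext^n_C(F, S_u) is well-defined. -/
open CategoryTheory CategoryTheory.Limits Opposite

noncomputable section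

section Functors

open Strip

variable (a b : ℝ) (K : Type) [Field K]

attribute [local instance] Classical.propDecidable

variable {a b K}

variable (a b K)

end Functors

section More

open Strip DirectSum

variable (a b : ℝ) (K : Type) [Field K]

attribute [local instance] Classical.propDecidable

end More

end

/-! ### Auxiliary material for the periodicity theorem -/

open Submodule LinearMap Module in
theorem finrank_cohomology_congr {K : Type*} [Field K]
    {A B C A' B' C' : Type*}
    [AddCommGroup A] [Module K A] [AddCommGroup B] [Module K B]
    [AddCommGroup C] [Module K C] [AddCommGroup A'] [Module K A']
    [AddCommGroup B'] [Module K B'] [AddCommGroup C'] [Module K C']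
    (f : A →ₗ[K] B) (g : B →ₗ[K] C) (f' : A' →ₗ[K] B') (g' : B' →ₗ[K] C')
    (e₁ : A ≃ₗ[K] A') (e₂ : B ≃ₗ[K] B') (e₃ : C ≃ₗ[K] C')
    (hf : ∀ x, f' (e₁ x) = - e₂ (f x)) (hg : ∀ x, g' (e₂ x) = - e₃ (g x)) :
    Module.finrank K (↥(ker g) ⧸ comap (ker g).subtype (range f)) =
      Module.finrank K (↥(ker g') ⧸ comap (ker g').subtype (range f')) := by
  have hker : (ker g).map (e₂ : B →ₗ[K] B') = ker g' := by
    ext y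
    simp only [Submodule.mem_map, mem_ker, LinearEquiv.coe_coe]
    constructor
    · rintro ⟨x, hx, rfl⟩
      rw [hg, hx, map_zero, neg_zero]
    · intro hy
      refine ⟨e₂.symm y, ?_, by simp⟩
      have h2 := hg (e₂.symm y)
      rw [e₂.apply_symm_apply, hy] at h2
      have h3 : e₃ (g (e₂.symm y)) = 0 := by rw [← neg_eq_zero, ← h2]
      exact e₃.injective (by simpa using h3)
  have hrange : (range f).map (e₂ : B →ₗ[K] B') = range f' := by
    ext y
    simp only [Submodule.mem_map, mem_range, LinearEquiv.coe_coe]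
    constructor
    · rintro ⟨x, ⟨a, rfl⟩, rfl⟩
      exact ⟨-(e₁ a), by rw [map_neg, hf, neg_neg]⟩
    · rintro ⟨a', rfl⟩
      refine ⟨f (-(e₁.symm a')), ⟨_, rfl⟩, ?_⟩
      rw [map_neg, map_neg, ← hf, e₁.apply_symm_apply]
  let eK : ↥(ker g) ≃ₗ[K] ↥(ker g') := e₂.ofSubmodules _ _ hker
  have hmap : (comap (ker g).subtype (range f)).map (eK : ↥(ker g) →ₗ[K] ↥(ker g')) =
      comap (ker g').subtype (range f') := by
    ext y
    simp only [Submodule.mem_map, mem_comap, coe_subtype, LinearEquiv.coe_coe]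
    constructor
    · rintro ⟨x, hx, rfl⟩
      have hco : (eK x : B') = e₂ (x : B) := rfl
      rw [← hrange, hco]
      exact Submodule.mem_map_of_mem hx
    · intro hy
      rw [← hrange] at hy
      obtain ⟨z, hz, hzy⟩ := hy
      have hzk : z ∈ ker g := by
        have h4 : (y : B') ∈ (ker g).map (e₂ : B →ₗ[K] B') := by rw [hker]; exact y.2
        obtain ⟨w, hw, hwz⟩ := h4
        have hwz' : w = z :=
          e₂.injective (by show (e₂ : B →ₗ[K] B') w = (e₂ : B →ₗ[K] B') z; rw [hwz, hzy])
        rwa [← hwz']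
      refine ⟨⟨z, hzk⟩, hz, ?_⟩
      apply Subtype.ext
      exact hzy
  exact LinearEquiv.finrank_eq (Submodule.Quotient.equiv _ _ eK hmap)

noncomputable section Periodicity

open CategoryTheory CategoryTheory.Limits Opposite Strip CategoryTheory.Functor

attribute [local instance] Classical.propDecidable

variable (a b : ℝ) (K : Type) [Field K]

instance strip_op_hom_subsingleton (X Y : (Strip a b)ᵒᵖ) : Subsingleton (X ⟶ Y) :=
  ⟨fun f g => by
    have h := Subsingleton.elim f.unop g.unop
    calc f = f.unop.op := rfl
    _ = g.unop.op := by rw [h]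
    _ = g := rfl⟩

/-- The glide reflection as an equivalence of categories `Mᵒᵖ ≌ Mᵒᵖ`. -/
def TfunEquiv : (Strip a b)ᵒᵖ ≌ (Strip a b)ᵒᵖ where
  functor := Tfun a b
  inverse := ((glideEquiv (a := a) (b := b)).symm.monotone.functor).op
  unitIso := NatIso.ofComponents
    (fun X => eqToIso (congrArg op (glideEquiv.symm_apply_apply X.unop).symm))
    (fun _ => Subsingleton.elim _ _)
  counitIso := NatIso.ofComponents
    (fun X => eqToIso (congrArg op (glideEquiv.apply_symm_apply X.unop)))
    (fun _ => Subsingleton.elim _ _)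
  functor_unitIso_comp := fun _ => Subsingleton.elim _ _

instance : (Tfun a b).IsEquivalence := (TfunEquiv a b).isEquivalence_functor

instance : ((whiskeringLeft (Strip a b)ᵒᵖ (Strip a b)ᵒᵖ (ModuleCat K)).obj
    (Tfun a b)).Full := Functor.IsEquivalence.full

instance : ((whiskeringLeft (Strip a b)ᵒᵖ (Strip a b)ᵒᵖ (ModuleCat K)).obj
    (Tfun a b)).Faithful := Functor.IsEquivalence.faithful

/-- The canonical linear equivalence on spaces of functions on `PLift`s of
equivalent propositions. -/
def pliftFunEquiv {p q : Prop} (h : p ↔ q) : (PLift p → K) ≃ₗ[K] (PLift q → K) :=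
  LinearEquiv.funCongrLeft K K
    (Equiv.plift.trans ((Equiv.ofIff h).symm.trans Equiv.plift.symm))

/-- The natural isomorphism `S_{Tv} ∘ T ≅ S_v`. -/
def psi (v : Strip a b) : Tfun a b ⋙ SimpleF a b K (glideEquiv v) ≅ SimpleF a b K v :=
  NatIso.ofComponents
    (fun u => (pliftFunEquiv K
      ((glideEquiv (a := a) (b := b)).injective.eq_iff
        (a := u.unop) (b := v))).toModuleIso)
    (by
      intro X Y fm
      ext g
      funext h
      show (if h' : glideEquiv (a := a) (b := b) X.unop = glideEquiv v then
              g ⟨h'⟩ else (0 : K))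
          = (if h' : X.unop = v then
              g ⟨show glideEquiv (a := a) (b := b) X.unop = glideEquiv v by rw [h']⟩
            else (0 : K))
      by_cases hx : X.unop = v
      · rw [dif_pos hx,
          dif_pos (show glideEquiv (a := a) (b := b) X.unop = glideEquiv v by rw [hx])]
      · rw [dif_neg hx,
          dif_neg (fun hh => hx ((glideEquiv (a := a) (b := b)).injective hh))])

/-- The basic periodicity map `Nat(P n, S_{Tv}) → Nat(P (n+3), S_v)`. -/
def phiHom (P : ℕ → (Strip a b)ᵒᵖ ⥤ ModuleCat K) (v : Strip a b) (n : ℕ)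
    (h : P (n + 3) = Tfun a b ⋙ P n) :
    (P n ⟶ SimpleF a b K (glideEquiv v)) →ₗ[K] (P (n + 3) ⟶ SimpleF a b K v) where
  toFun η := eqToHom h ≫ whiskerLeft (Tfun a b) η ≫ (psi a b K v).hom
  map_add' η θ := by
    show eqToHom h ≫ whiskerLeft (Tfun a b) (η + θ) ≫ (psi a b K v).hom
        = (eqToHom h ≫ whiskerLeft (Tfun a b) η ≫ (psi a b K v).hom)
          + (eqToHom h ≫ whiskerLeft (Tfun a b) θ ≫ (psi a b K v).hom)
    have hw : whiskerLeft (Tfun a b) (η + θ)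
        = whiskerLeft (Tfun a b) η + whiskerLeft (Tfun a b) θ := by
      apply NatTrans.ext; funext u
      simp [NatTrans.app_add]
    rw [hw, Preadditive.add_comp, Preadditive.comp_add]
  map_smul' c η := by
    show eqToHom h ≫ whiskerLeft (Tfun a b) (c • η) ≫ (psi a b K v).hom
        = c • (eqToHom h ≫ whiskerLeft (Tfun a b) η ≫ (psi a b K v).hom)
    have hw : whiskerLeft (Tfun a b) (c • η) = c • whiskerLeft (Tfun a b) η := by
      apply NatTrans.ext; funext u
      simp [NatTrans.app_smul]
    rw [hw]
    simp [Linear.smul_comp, Linear.comp_smul]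

theorem phiHom_bijective (P : ℕ → (Strip a b)ᵒᵖ ⥤ ModuleCat K) (v : Strip a b) (n : ℕ)
    (h : P (n + 3) = Tfun a b ⋙ P n) :
    Function.Bijective (phiHom a b K P v n h) := by
  constructor
  · intro η θ hh
    apply ((whiskeringLeft (Strip a b)ᵒᵖ (Strip a b)ᵒᵖ (ModuleCat K)).obj
      (Tfun a b)).map_injective
    show whiskerLeft (Tfun a b) η = whiskerLeft (Tfun a b) θ
    have h2 := congrArg (fun t => eqToHom h.symm ≫ t ≫ (psi a b K v).inv) hh
    simpa [phiHom, Category.assoc] using h2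
  · intro θ
    obtain ⟨η, hη⟩ := ((whiskeringLeft (Strip a b)ᵒᵖ (Strip a b)ᵒᵖ (ModuleCat K)).obj
      (Tfun a b)).map_surjective (eqToHom h.symm ≫ θ ≫ (psi a b K v).inv)
    refine ⟨η, ?_⟩
    show eqToHom h ≫ whiskerLeft (Tfun a b) η ≫ (psi a b K v).hom = θ
    have hη' : whiskerLeft (Tfun a b) η = eqToHom h.symm ≫ θ ≫ (psi a b K v).inv := hη
    rw [hη']
    simp

theorem phiHom_comm (P : ℕ → (Strip a b)ᵒᵖ ⥤ ModuleCat K) (d : ∀ n, P (n + 1) ⟶ P n)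
    (hEq : ∀ n, P (n + 3) = Tfun a b ⋙ P n)
    (hd : ∀ n, d (n + 3) =
      eqToHom (hEq (n + 1)) ≫ (-(whiskerLeft (Tfun a b) (d n))) ≫ eqToHom (hEq n).symm)
    (v : Strip a b) (n : ℕ) (η : P n ⟶ SimpleF a b K (glideEquiv v)) :
    dStar a b K P d v (n + 3) (phiHom a b K P v n (hEq n) η)
      = - phiHom a b K P v (n + 1) (hEq (n + 1))
          (dStar a b K P d (glideEquiv v) n η) := by
  show d (n + 3) ≫ (eqToHom (hEq n) ≫ whiskerLeft (Tfun a b) η ≫ (psi a b K v).hom)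
      = -(eqToHom (hEq (n + 1)) ≫ whiskerLeft (Tfun a b) (d n ≫ η) ≫ (psi a b K v).hom)
  rw [hd n]
  simp [whiskerLeft_comp, Preadditive.neg_comp, Preadditive.comp_neg, Category.assoc]

/-- Periodicity transport of triviality of values. -/
theorem subsingleton_iter (P : ℕ → (Strip a b)ᵒᵖ ⥤ ModuleCat K)
    (hEq : ∀ n, P (n + 3) = Tfun a b ⋙ P n) :
    ∀ (k n : ℕ) (u : Strip a b),
      Subsingleton ((P n).obj (op ((fun p => glideEquiv (a := a) (b := b) p)^[k] u))) →
      Subsingleton ((P (n + 3 * k)).obj (op u)) := by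
  intro k
  induction k with
  | zero => intro n u hs; simpa using hs
  | succ k ih =>
    intro n u hs
    have h1 : Subsingleton ((P (n + 3 * k)).obj
        (op (glideEquiv (a := a) (b := b) u))) := by
      apply ih n (glideEquiv u)
      rwa [Function.iterate_succ_apply] at hs
    have h2 : P (n + 3 * k + 3) = Tfun a b ⋙ P (n + 3 * k) := hEq _
    have h3 : Subsingleton ((P (n + 3 * k + 3)).obj (op u)) := by
      rw [h2]; exact h1
    have h4 : n + 3 * (k + 1) = n + 3 * k + 3 := by ring
    rw [h4]
    exact h3

theorem iterate_glide_diff (k : ℕ) (p : Strip a b) :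
    (((fun q => glideEquiv (a := a) (b := b) q)^[k] p)).1.2
      - (((fun q => glideEquiv (a := a) (b := b) q)^[k] p)).1.1
      = p.1.2 - p.1.1 + k * (b - a) := by
  induction k with
  | zero => simp
  | succ k ih =>
    rw [Function.iterate_succ_apply']
    show (glideEquiv (a := a) (b := b)
        ((fun q => glideEquiv (a := a) (b := b) q)^[k] p)).1.2
      - (glideEquiv (a := a) (b := b)
        ((fun q => glideEquiv (a := a) (b := b) q)^[k] p)).1.1
      = p.1.2 - p.1.1 + (↑(k + 1) : ℝ) * (b - a)
    rw [glideEquiv_coords]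
    dsimp only
    push_cast
    linarith [ih]

theorem hom_simple_subsingleton (G : (Strip a b)ᵒᵖ ⥤ ModuleCat K) (v : Strip a b)
    (hs : Subsingleton (G.obj (op v))) : Subsingleton (G ⟶ SimpleF a b K v) := by
  constructor
  intro η θ
  apply NatTrans.ext
  funext u
  apply ModuleCat.hom_ext
  apply LinearMap.ext
  intro x
  funext hp
  obtain rfl : u = op v := congrArg op hp.down
  have hx : x = 0 := Subsingleton.elim x 0
  rw [hx, map_zero, map_zero]

end Periodicity


/-- for an equivariant projective resolution of a `𝒥`-presentable functor,
`β^{n+3}(F) = β^n(F) ∘ T` for `n ≥ 1`; consequently only finitely many Betti numbers are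
nonzero at each point, and the Euler function is well-defined. -/
theorem equivariant_betti_periodicity (a b : ℝ) (K : Type) [Field K]
    (F : (Strip a b)ᵒᵖ ⥤ ModuleCat K) (hF : JPresentable a b K F)
    (P : ℕ → (Strip a b)ᵒᵖ ⥤ ModuleCat K) (d : ∀ n, P (n + 1) ⟶ P n) (ε : P 0 ⟶ F)
    (hres : IsJResolution a b K F P d ε) (heq : IsEquivariantRes a b K P d) :
    (∀ n : ℕ, 1 ≤ n → ∀ v : Strip a b, Strip.InInterior v →
      extDim a b K P d v (n + 3) = extDim a b K P d (Strip.glideEquiv v) n) ∧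
    (∀ v : Strip a b, Strip.InInterior v →
      ∃ N : ℕ, ∀ n, N ≤ n → extDim a b K P d v n = 0) := by
  obtain ⟨hEq, hd⟩ := heq
  constructor
  · rintro n hn v _
    obtain ⟨m, rfl⟩ : ∃ m, n = m + 1 := ⟨n - 1, by omega⟩
    let e₁ := LinearEquiv.ofBijective (phiHom a b K P v m (hEq m))
      (phiHom_bijective a b K P v m (hEq m))
    let e₂ := LinearEquiv.ofBijective (phiHom a b K P v (m + 1) (hEq (m + 1)))
      (phiHom_bijective a b K P v (m + 1) (hEq (m + 1)))
    let e₃ := LinearEquiv.ofBijective (phiHom a b K P v (m + 2) (hEq (m + 2)))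
      (phiHom_bijective a b K P v (m + 2) (hEq (m + 2)))
    have key := finrank_cohomology_congr
      (dStar a b K P d (Strip.glideEquiv v) m)
      (dStar a b K P d (Strip.glideEquiv v) (m + 1))
      (dStar a b K P d v (m + 3))
      (dStar a b K P d v (m + 4))
      e₁ e₂ e₃
      (fun x => phiHom_comm a b K P d hEq hd v m x)
      (fun x => phiHom_comm a b K P d hEq hd v (m + 1) x)
    exact key.symm
  · intro v hv
    obtain ⟨hav, hvb⟩ := hv
    have hab : (0 : ℝ) < b - a := by linarith
    obtain ⟨c0, hc0⟩ := (hres.1 0).2.2.2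
    obtain ⟨c1, hc1⟩ := (hres.1 1).2.2.2
    obtain ⟨c2, hc2⟩ := (hres.1 2).2.2.2
    set D : ℝ := v.1.2 - v.1.1 with hD
    set C : ℝ := max c0 (max c1 c2) with hC
    obtain ⟨k₀, hk₀⟩ := exists_nat_gt ((C - D) / (b - a))
    have hbig : ∀ k : ℕ, k₀ ≤ k → C < D + k * (b - a) := by
      intro k hk
      have h1 : (C - D) / (b - a) < (k : ℝ) :=
        lt_of_lt_of_le hk₀ (by exact_mod_cast hk)
      have h2 : C - D < k * (b - a) := by
        rw [div_lt_iff₀ hab] at h1; linarith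
      linarith
    have hsub : ∀ n : ℕ, 3 * k₀ + 3 ≤ n → Subsingleton ((P n).obj (op v)) := by
      intro n hn
      have hr3 : n % 3 < 3 := Nat.mod_lt _ (by omega)
      have hnk : n = n % 3 + 3 * (n / 3) := by omega
      have hkge : k₀ ≤ n / 3 := by omega
      have hdiff := iterate_glide_diff a b (n / 3) v
      have htriv : Subsingleton ((P (n % 3)).obj
          (op ((fun q => Strip.glideEquiv (a := a) (b := b) q)^[n / 3] v))) := by
        set w := (fun q => Strip.glideEquiv (a := a) (b := b) q)^[n / 3] v with hw
        have hwdiff : C < w.1.2 - w.1.1 := by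
          rw [hdiff]; exact hbig _ hkge
        have hzero : ∀ x : (P (n % 3)).obj (op w), x = 0 := by
          interval_cases h : n % 3
          · exact fun x => hc0 w (lt_of_le_of_lt (le_max_left _ _) hwdiff) x
          · exact fun x => hc1 w
              (lt_of_le_of_lt (le_trans (le_max_left _ _) (le_max_right _ _)) hwdiff) x
          · exact fun x => hc2 w
              (lt_of_le_of_lt (le_trans (le_max_right _ _) (le_max_right _ _)) hwdiff) x
        exact ⟨fun x y => (hzero x).trans (hzero y).symm⟩
      have := subsingleton_iter a b K P hEq (n / 3) (n % 3) v htriv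
      rwa [← hnk] at this
    refine ⟨3 * k₀ + 4, fun n hn => ?_⟩
    obtain ⟨m, rfl⟩ : ∃ m, n = m + 1 := ⟨n - 1, by omega⟩
    have hhom : Subsingleton (P (m + 1) ⟶ SimpleF a b K v) :=
      hom_simple_subsingleton a b K (P (m + 1)) v (hsub (m + 1) (by omega))
    show Module.finrank K
        (↥(LinearMap.ker (dStar a b K P d v (m + 1))) ⧸
          Submodule.comap (LinearMap.ker (dStar a b K P d v (m + 1))).subtype
            (LinearMap.range (dStar a b K P d v m))) = 0
    haveI : Subsingleton
        (↥(LinearMap.ker (dStar a b K P d v (m + 1)))) := by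
      constructor; intro x y; apply Subtype.ext; exact Subsingleton.elim _ _
    haveI : Subsingleton
        (↥(LinearMap.ker (dStar a b K P d v (m + 1))) ⧸
          Submodule.comap (LinearMap.ker (dStar a b K P d v (m + 1))).subtype
            (LinearMap.range (dStar a b K P d v m))) :=
      (Submodule.mkQ_surjective _).subsingleton
    exact Module.finrank_zero_of_subsingleton
end
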